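/- Let R be a ring spectrum with an augmentation R → k to a field k which is surjective on homotopy, with 'augmentation ideal' I defined by the triangle I → R → k, and suppose R_* is graded coherent. Then the following are equivalent: (1) k is cohomologically locally finitely presented in D(R) (with respect to D^c(R)); (2) k is a finitely presented R_*-module; (3) I_* = ker(R_* → k) is a finitely generated R_*-module. -/

import Mathlib

/-!
We model the derived category `D(R)` of a ring spectrum `R` as a pretriangulated
category, with `R` (respectively `k`) specified as distinguished objects.
`FinBuilds X Y` says that `Y` lies in the thick subcategory generated by `X`;
in particular `FinBuilds R M` says that `M` is a small (= compact = perfect)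
`R`-module, so `D^c(R)` is the class `FinBuilds R`.  Homotopy groups are
modelled via the graded hom groups `π_* M = ⊕ᵢ [R, Σⁱ M]`, with the coefficient
ring `R_*` packaged (with its grading suppressed) in `GradedHomData`.
-/

open CategoryTheory Limits Pretriangulated

universe v u

section Triangulated

variable (C : Type u) [Category.{v} C] [HasZeroObject C] [Preadditive C]
  [HasShift C ℤ] [∀ n : ℤ, (shiftFunctor C n).Additive] [Pretriangulated C]

/-- A class of objects of a pretriangulated category is thick if it is closed
under isomorphisms, shifts, retracts (direct summands) and cones. -/
def IsThickClass (P : C → Prop) : Prop :=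
  (∀ (X Y : C), (X ≅ Y) → P X → P Y) ∧
  (∀ (n : ℤ) (X : C), P X → P (X⟦n⟧)) ∧
  (∀ (X Y : C), (∃ (s : X ⟶ Y) (r : Y ⟶ X), s ≫ r = 𝟙 X) → P Y → P X) ∧
  (∀ (T : Triangle C), T ∈ (distTriang C) → P T.obj₁ → P T.obj₂ → P T.obj₃)

/-- `FinBuilds X Y` : `Y` lies in the thick subcategory generated by `X`. -/
def FinBuilds (X Y : C) : Prop := ∀ P : C → Prop, IsThickClass C P → P X → P Y

/-- `X` is a retract (direct summand) of `Y`. -/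
def IsRetractOf (X Y : C) : Prop := ∃ (s : X ⟶ Y) (r : Y ⟶ X), s ≫ r = 𝟙 X

variable [HasFiniteBiproducts C]

/-- `⟨g⟩₁` : retracts of finite direct sums of (de)suspensions of `g`. -/
def GenOne (g X : C) : Prop :=
  ∃ (n : ℕ) (f : Fin n → ℤ), IsRetractOf C X (⨁ fun i : Fin n => g⟦f i⟧)

/-- `⟨g⟩_{n+1}` consists of the retracts of extensions of an object of `⟨g⟩₁`
by an object of `⟨g⟩ₙ`. -/
def GenLe (g : C) : ℕ → C → Prop
  | 0, X => GenOne C g X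
  | n + 1, X => GenLe g n X ∨
      ∃ T : Triangle C, T ∈ (distTriang C) ∧ GenLe g n T.obj₁ ∧ GenOne C g T.obj₃ ∧
        IsRetractOf C X T.obj₂

/-- A class of objects (viewed as a full triangulated subcategory) is strongly
generated if some object `g` of the class generates it in a bounded number of
steps: `K = ⟨g⟩ₙ` for some `n`. -/
def StronglyGeneratedClass (P : C → Prop) : Prop :=
  ∃ g : C, P g ∧ ∃ n : ℕ, ∀ X : C, P X → GenLe C g n X

end Triangulated

section LFP

variable (C : Type u) [Category.{v} C] [Preadditive C] [HasShift C ℤ]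

/-- Object-level formulation (via Yoneda on the full subcategory of objects
satisfying `P`) of: "the restriction of `Hom(−, X)` to the subcategory `P` is
a locally finitely generated functor": for every `c` in `P` there is an `l` in
`P` and a natural map `Hom(−,l) → Hom(−,X)` (i.e. a morphism `l → X`) which is
surjective on all shifts of `c`. -/
def CLFG (P : C → Prop) (X : C) : Prop :=
  ∀ c : C, P c → ∃ (l : C) (_ : P l) (u : l ⟶ X),
    ∀ (i : ℤ) (v : (c⟦i⟧ : C) ⟶ X), ∃ w : (c⟦i⟧ : C) ⟶ l, w ≫ u = v

/-- Object-level formulation (via Yoneda on the full subcategory of objects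
satisfying `P`) of: "the restriction of `Hom(−, X)` to the subcategory `P` is
a locally finitely presented functor": it is locally finitely generated and the
kernel (in the functor category) of every natural map `Hom(−,m) → Hom(−,X)`
from a representable is again locally finitely generated.  When `P` is the
class of small objects of `D(R)`, this says exactly that `X` is
cohomologically locally finitely presented, i.e. `X ∈ D^lfp(R)`. -/
def CLFP (P : C → Prop) (X : C) : Prop :=
  CLFG C P X ∧
  ∀ (m : C), P m → ∀ u : m ⟶ X, ∀ c : C, P c →
    ∃ (l : C) (_ : P l) (w : l ⟶ m), w ≫ u = 0 ∧
      ∀ (i : ℤ) (v : (c⟦i⟧ : C) ⟶ m), v ≫ u = 0 → ∃ t : (c⟦i⟧ : C) ⟶ l, t ≫ w = v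

/-- Underlying data for the graded endomorphism ring `K^*(g,g) = ⊕ᵢ K(g, Σⁱ g)`
of an object `g`, and the graded modules `K^*(g,m) = ⊕ᵢ K(g, Σⁱ m)` over it.
The ring `Λ` models `K^*(g,g)` (grading suppressed); its underlying additive
group is the direct sum of the shifted hom-groups. -/
structure GradedHomData₀ (g : C) where
  Λ : Type v
  ringΛ : Ring Λ
  eΛ : Λ ≃+ DirectSum ℤ (fun i => g ⟶ (g⟦i⟧))
  mod : ∀ m : C, Module Λ (DirectSum ℤ (fun i => g ⟶ (m⟦i⟧)))

attribute [instance] GradedHomData₀.ringΛ GradedHomData₀.mod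

/-- `K^*(g,m) = ⊕ᵢ K(g, Σⁱ m)`; for `g = R` in `D(R)` this is `π_* M = M_*`. -/
abbrev piSt (g m : C) := DirectSum ℤ (fun i => g ⟶ (m⟦i⟧))

/-- Graded endomorphism ring data: the module structure on `K^*(g,m)` is given
by composition, and the multiplicative unit of `Λ` is the identity of `g`. -/
structure GradedHomData (g : C) extends GradedHomData₀ C g where
  comp_smul_of : ∀ (m : C) (i j : ℤ) (f : g ⟶ (g⟦i⟧)) (x : g ⟶ (m⟦j⟧)),
    eΛ.symm (DirectSum.of (fun n => g ⟶ (g⟦n⟧)) i f) •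
        DirectSum.of (fun n => g ⟶ (m⟦n⟧)) j x
      = DirectSum.of (fun n => g ⟶ (m⟦n⟧)) (j + i)
          (f ≫ (x⟦i⟧') ≫ (shiftFunctorAdd C j i).inv.app m)
  one_def : eΛ 1 = DirectSum.of (fun n => g ⟶ (g⟦n⟧)) 0 ((shiftFunctorZero C ℤ).inv.app g)

end LFP

/-- A finitely presented module (gradings suppressed). -/
def IsFPModule (R : Type*) (M : Type*) [Ring R] [AddCommGroup M] [Module R M] : Prop :=
  ∃ (n : ℕ) (f : (Fin n → R) →ₗ[R] M), Function.Surjective f ∧ (LinearMap.ker f).FG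

/-- A coherent ring: every finitely generated (left) ideal is finitely
presented (gradings suppressed). -/
def IsCoherentRing (R : Type*) [Ring R] : Prop :=
  ∀ I : Submodule R R, I.FG → IsFPModule R I


open ZeroObject

set_option linter.unusedSectionVars false
set_option linter.unusedVariables false
set_option maxHeartbeats 1000000
set_option synthInstance.maxHeartbeats 400000

section Alg

variable {Λ : Type*} [Ring Λ]

lemma isFPModule_iff {M : Type*} [AddCommGroup M] [Module Λ M] :
    IsFPModule Λ M ↔ Module.FinitePresentation Λ M := by
  constructor
  · rintro ⟨n, f, hs, hk⟩
    exact Module.finitePresentation_of_surjective f hs hk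
  · intro h
    obtain ⟨n, f, hf⟩ := Module.Finite.exists_fin' Λ M
    exact ⟨n, f, hf, Module.FinitePresentation.fg_ker f hf⟩

lemma fp_of_equiv {M N : Type*} [AddCommGroup M] [Module Λ M] [AddCommGroup N] [Module Λ N]
    (e : M ≃ₗ[Λ] N) (h : Module.FinitePresentation Λ M) : Module.FinitePresentation Λ N := by
  refine Module.finitePresentation_of_surjective e.toLinearMap e.surjective ?_
  have : LinearMap.ker (e.toLinearMap) = ⊥ := LinearMap.ker_eq_bot.mpr e.injective
  rw [this]; exact Submodule.fg_bot

lemma fg_of_equiv {M N : Type*} [AddCommGroup M] [Module Λ M] [AddCommGroup N] [Module Λ N]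
    (e : M ≃ₗ[Λ] N) (h : Module.Finite Λ M) : Module.Finite Λ N :=
  Module.Finite.of_surjective e.toLinearMap e.surjective

/-- Retracts of finitely presented modules are finitely presented. -/
lemma fp_of_retract {M N : Type*} [AddCommGroup M] [Module Λ M] [AddCommGroup N] [Module Λ N]
    (s : N →ₗ[Λ] M) (r : M →ₗ[Λ] N) (hrs : r.comp s = LinearMap.id)
    (h : Module.FinitePresentation Λ M) : Module.FinitePresentation Λ N := by
  have hr : Function.Surjective r := by
    intro y; exact ⟨s y, by simpa using congrArg (fun f => f y) (congrArg DFunLike.coe hrs)⟩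
  refine Module.finitePresentation_of_surjective r hr ?_
  have hker : LinearMap.ker r = LinearMap.range (LinearMap.id (M := M) - s.comp r) := by
    ext x
    simp only [LinearMap.mem_ker, LinearMap.mem_range, LinearMap.sub_apply, LinearMap.id_apply,
      LinearMap.comp_apply]
    constructor
    · intro hx; exact ⟨x, by rw [hx, map_zero, sub_zero]⟩
    · rintro ⟨y, rfl⟩
      have := congrArg (fun f => f (r y)) (congrArg DFunLike.coe hrs)
      simp only [LinearMap.coe_comp, Function.comp_apply, LinearMap.id_coe, id_eq] at this
      simp [this]
  rw [hker, ← Submodule.map_top]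
  exact Submodule.FG.map _ Module.Finite.fg_top

/-- Over a coherent ring, finitely generated submodules of `Fin n → Λ` are
finitely presented. -/
lemma coherent_fg_submodule_free (hcoh : IsCoherentRing Λ) :
    ∀ (n : ℕ) (N : Submodule Λ (Fin n → Λ)), N.FG → Module.FinitePresentation Λ N := by
  intro n
  induction n with
  | zero =>
    intro N hN
    haveI : Subsingleton (Fin 0 → Λ) := by infer_instance
    haveI : Subsingleton N := ⟨fun a b => Subtype.ext (Subsingleton.elim _ _)⟩
    refine Module.finitePresentation_of_surjective (0 : (Fin 0 → Λ) →ₗ[Λ] N)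
      (fun y => ⟨0, Subsingleton.elim _ _⟩) ?_
    exact Submodule.fg_of_fg_map_of_fg_inf_ker (0 : (Fin 0 → Λ) →ₗ[Λ] N)
      (by simpa using Submodule.fg_bot) (by simpa using Module.Finite.fg_top)
  | succ n IH =>
    intro N hN
    set π : (Fin (n+1) → Λ) →ₗ[Λ] Λ := LinearMap.proj (Fin.last n) with hπ
    set ρ : (Fin (n+1) → Λ) →ₗ[Λ] (Fin n → Λ) :=
      LinearMap.pi (fun i => LinearMap.proj i.castSucc) with hρ
    have key : ∀ x : Fin (n+1) → Λ, π x = 0 → ρ x = 0 → x = 0 := by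
      intro x h1 h2
      funext i
      refine Fin.lastCases ?_ ?_ i
      · exact h1
      · intro j; exact congrFun h2 j
    set φ : N →ₗ[Λ] Λ := π.comp N.subtype with hφ
    have hI : (LinearMap.range φ).FG := by
      rw [hφ, LinearMap.range_comp, Submodule.range_subtype]
      exact hN.map π
    haveI hFPI : Module.FinitePresentation Λ (LinearMap.range φ) :=
      isFPModule_iff.mp (hcoh _ hI)
    haveI : Module.Finite Λ N := Module.Finite.iff_fg.mpr hN
    have hsurj : Function.Surjective φ.rangeRestrict := LinearMap.surjective_rangeRestrict φ
    have hkerfg : (LinearMap.ker φ.rangeRestrict).FG :=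
      Module.FinitePresentation.fg_ker _ hsurj
    have hkk : LinearMap.ker φ.rangeRestrict = LinearMap.ker φ := LinearMap.ker_rangeRestrict φ
    set K : Submodule Λ (Fin (n+1) → Λ) := (LinearMap.ker φ).map N.subtype with hK
    have hKfg : K.FG := (hkk ▸ hkerfg).map _
    have hKπ : ∀ x ∈ K, π x = 0 := by
      rintro x ⟨y, hy, rfl⟩
      exact hy
    set N₀ : Submodule Λ (Fin n → Λ) := K.map ρ with hN₀
    have hN₀fg : N₀.FG := hKfg.map ρ
    have hFPN₀ : Module.FinitePresentation Λ N₀ := IH _ hN₀fg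
    -- K ≃ N₀
    have hmaps : ∀ x ∈ K, ρ x ∈ N₀ := fun x hx => Submodule.mem_map_of_mem hx
    set ρ' : K →ₗ[Λ] N₀ := ρ.restrict hmaps with hρ'
    have hbij : Function.Bijective ρ' := by
      constructor
      · intro x y hxy
        have h1 : ρ (x : Fin (n+1) → Λ) = ρ (y : Fin (n+1) → Λ) := congrArg Subtype.val hxy
        have h2 : π ((x : Fin (n+1) → Λ) - y) = 0 := by
          rw [map_sub, hKπ _ x.2, hKπ _ y.2, sub_zero]
        have h3 : ρ ((x : Fin (n+1) → Λ) - y) = 0 := by rw [map_sub, h1, sub_self]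
        have := key _ h2 h3
        exact Subtype.ext (by rwa [sub_eq_zero] at this)
      · rintro ⟨y, x, hx, rfl⟩
        exact ⟨⟨x, hx⟩, rfl⟩
    have hFPK : Module.FinitePresentation Λ K :=
      fp_of_equiv (LinearEquiv.ofBijective ρ' hbij).symm hFPN₀
    have hFPkerφ : Module.FinitePresentation Λ (LinearMap.ker φ) := by
      have e3 : ↥K ≃ₗ[Λ] ↥(LinearMap.ker φ) :=
        (Submodule.equivMapOfInjective N.subtype (Submodule.injective_subtype N)
          (LinearMap.ker φ)).symm
      exact fp_of_equiv (M := ↥K) (N := ↥(LinearMap.ker φ)) e3 hFPK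
    haveI : Module.FinitePresentation Λ (LinearMap.ker φ.rangeRestrict) := by
      have e : (LinearMap.ker φ) ≃ₗ[Λ] (LinearMap.ker φ.rangeRestrict) :=
        LinearEquiv.ofEq _ _ hkk.symm
      exact fp_of_equiv (M := ↥(LinearMap.ker φ)) (N := ↥(LinearMap.ker φ.rangeRestrict)) e hFPkerφ
    exact Module.finitePresentation_of_ker φ.rangeRestrict hsurj

/-- Over a coherent ring, finitely generated submodules of finitely presented
modules are finitely presented. -/
lemma coherent_fg_submodule (hcoh : IsCoherentRing Λ) {M : Type*} [AddCommGroup M] [Module Λ M]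
    (hM : Module.FinitePresentation Λ M) (N : Submodule Λ M) (hN : N.FG) :
    Module.FinitePresentation Λ N := by
  obtain ⟨n, q, hq, hker⟩ := isFPModule_iff.mpr hM
  set N' : Submodule Λ (Fin n → Λ) := N.comap q with hN'
  have hkN' : LinearMap.ker q ≤ N' := by
    intro x hx
    simp only [hN', Submodule.mem_comap, LinearMap.mem_ker.mp hx]
    exact N.zero_mem
  have hmapN' : N'.map q = N := Submodule.map_comap_eq_of_surjective hq N
  have hN'fg : N'.FG := by
    apply Submodule.fg_of_fg_map_of_fg_inf_ker q
    · rw [hmapN']; exact hN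
    · rw [inf_eq_right.mpr hkN']; exact hker
  haveI hFPN' : Module.FinitePresentation Λ N' := coherent_fg_submodule_free hcoh n N' hN'fg
  have hmaps : ∀ x ∈ N', q x ∈ N := fun x hx => hx
  set qN : N' →ₗ[Λ] N := q.restrict hmaps with hqN
  have hqNsurj : Function.Surjective qN := by
    rintro ⟨y, hy⟩
    rw [← hmapN'] at hy
    obtain ⟨x, hx, rfl⟩ := hy
    exact ⟨⟨x, hx⟩, rfl⟩
  have hkerqN : LinearMap.ker qN = (LinearMap.ker q).comap N'.subtype := by
    ext x
    simp only [LinearMap.mem_ker, Submodule.mem_comap, Submodule.coe_subtype]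
    exact ⟨fun h => congrArg Subtype.val h, fun h => Subtype.ext h⟩
  have hkerfg : (LinearMap.ker qN).FG := by
    rw [hkerqN]
    have e := Submodule.comapSubtypeEquivOfLe hkN'
    haveI : Module.Finite Λ (LinearMap.ker q) := Module.Finite.iff_fg.mpr hker
    have e2 : (LinearMap.ker q) ≃ₗ[Λ] ↥((LinearMap.ker q).comap N'.subtype) := e.symm
    have h2 : Module.Finite Λ ↥((LinearMap.ker q).comap N'.subtype) := fg_of_equiv (M := ↥(LinearMap.ker q)) (N := ↥((LinearMap.ker q).comap N'.subtype)) e2 this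
    exact Module.Finite.iff_fg.mp h2
  exact Module.finitePresentation_of_surjective qN hqNsurj hkerfg

/-- Over a coherent ring, the kernel of any linear map between finitely
presented modules is finitely generated. -/
lemma coherent_fg_ker (hcoh : IsCoherentRing Λ) {D E : Type*} [AddCommGroup D] [Module Λ D]
    [AddCommGroup E] [Module Λ E] (hD : Module.FinitePresentation Λ D)
    (hE : Module.FinitePresentation Λ E) (δ : D →ₗ[Λ] E) : (LinearMap.ker δ).FG := by
  haveI := hD
  haveI : Module.Finite Λ D := inferInstance
  have hrfg : (LinearMap.range δ).FG := by
    rw [← Submodule.map_top]; exact Submodule.FG.map _ Module.Finite.fg_top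
  haveI : Module.FinitePresentation Λ (LinearMap.range δ) :=
    coherent_fg_submodule hcoh hE _ hrfg
  have := Module.FinitePresentation.fg_ker δ.rangeRestrict (LinearMap.surjective_rangeRestrict δ)
  rwa [LinearMap.ker_rangeRestrict] at this

/-- In an exact sequence `A → B → C → D → E` with `A` finite and `B`, `D`, `E`
finitely presented over a coherent ring, `C` is finitely presented. -/
lemma fp_of_exact (hcoh : IsCoherentRing Λ) {A B C D E : Type*}
    [AddCommGroup A] [Module Λ A] [AddCommGroup B] [Module Λ B] [AddCommGroup C] [Module Λ C]
    [AddCommGroup D] [Module Λ D] [AddCommGroup E] [Module Λ E]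
    (α : A →ₗ[Λ] B) (β : B →ₗ[Λ] C) (γ : C →ₗ[Λ] D) (δ : D →ₗ[Λ] E)
    (hAB : LinearMap.range α = LinearMap.ker β)
    (hBC : LinearMap.range β = LinearMap.ker γ)
    (hCD : LinearMap.range γ = LinearMap.ker δ)
    (hA : Module.Finite Λ A) (hB : Module.FinitePresentation Λ B)
    (hD : Module.FinitePresentation Λ D) (hE : Module.FinitePresentation Λ E) :
    Module.FinitePresentation Λ C := by
  haveI := hA; haveI := hB; haveI := hD; haveI := hE
  have hkerβfg : (LinearMap.ker β).FG := by
    rw [← hAB, ← Submodule.map_top]; exact Submodule.FG.map _ Module.Finite.fg_top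
  have hFPrangeβ : Module.FinitePresentation Λ (LinearMap.range β) := by
    refine Module.finitePresentation_of_surjective β.rangeRestrict
      (LinearMap.surjective_rangeRestrict β) ?_
    rwa [LinearMap.ker_rangeRestrict]
  have hkerδfg : (LinearMap.ker δ).FG := coherent_fg_ker hcoh hD hE δ
  have hrangeγfg : (LinearMap.range γ).FG := by rw [hCD]; exact hkerδfg
  haveI hFPrangeγ : Module.FinitePresentation Λ (LinearMap.range γ) :=
    coherent_fg_submodule hcoh hD _ hrangeγfg
  haveI : Module.FinitePresentation Λ (LinearMap.ker γ.rangeRestrict) := by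
    rw [LinearMap.ker_rangeRestrict]
    exact fp_of_equiv (LinearEquiv.ofEq _ _ hBC) hFPrangeβ
  exact Module.finitePresentation_of_ker γ.rangeRestrict (LinearMap.surjective_rangeRestrict γ)

end Alg

section Cat

variable {C : Type u} [Category.{v} C] [HasZeroObject C] [Preadditive C]
  [HasShift C ℤ] [∀ n : ℤ, (shiftFunctor C n).Additive] [Pretriangulated C]
variable {RR : C} (Γ : GradedHomData C RR)

/-- inclusion of the `j`-th graded piece of `π_*`. -/
abbrev ofpi (X : C) (j : ℤ) (x : RR ⟶ X⟦j⟧) : piSt C RR X :=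
  DirectSum.of (fun i => RR ⟶ X⟦i⟧) j x

lemma ofpi_cast {X : C} {i j : ℤ} (h : i = j) (x : RR ⟶ X⟦i⟧) :
    ofpi X i x = ofpi X j (x ≫ eqToHom (by rw [h])) := by
  subst h; simp

lemma dof_cast {X : C} {i j : ℤ} (h : i = j) (x : RR ⟶ X⟦i⟧) :
    DirectSum.of (fun n => RR ⟶ X⟦n⟧) i x
      = DirectSum.of (fun n => RR ⟶ X⟦n⟧) j (x ≫ eqToHom (by rw [h])) := by
  subst h; simp

lemma linearize {X Y : C} (F : piSt C RR X →+ piSt C RR Y)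
    (h : ∀ (i j : ℤ) (f : RR ⟶ RR⟦i⟧) (x : RR ⟶ X⟦j⟧),
      F (Γ.eΛ.symm (ofpi RR i f) • ofpi X j x)
        = Γ.eΛ.symm (ofpi RR i f) • F (ofpi X j x)) :
    ∀ (c : Γ.Λ) (x : piSt C RR X), F (c • x) = c • F x := by
  have main : ∀ (μ : piSt C RR RR) (x : piSt C RR X),
      F (Γ.eΛ.symm μ • x) = Γ.eΛ.symm μ • F x := by
    intro μ x
    induction x using DirectSum.induction_on with
    | zero => simp
    | of j x =>
      induction μ using DirectSum.induction_on with
      | zero => simp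
      | of i f => exact h i j f x
      | add μ₁ μ₂ h₁ h₂ => simp [map_add, add_smul, h₁, h₂]
    | add x y hx hy => simp [smul_add, hx, hy]
  intro c x
  simpa using main (Γ.eΛ c) x

/-- `π_*` of a morphism, as an additive map. -/
def pmapA {X Y : C} (φ : X ⟶ Y) : piSt C RR X →+ piSt C RR Y :=
  DirectSum.toAddMonoid (fun j =>
    (DirectSum.of (fun i => RR ⟶ Y⟦i⟧) j).comp
      (AddMonoidHom.mk' (fun x => x ≫ φ⟦j⟧') (fun a b => Preadditive.add_comp _ _ _ _ _ _)))

lemma pmapA_of {X Y : C} (φ : X ⟶ Y) (j : ℤ) (x : RR ⟶ X⟦j⟧) :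
    pmapA (RR := RR) φ (ofpi X j x) = ofpi Y j (x ≫ φ⟦j⟧') := by
  simp [pmapA, ofpi]

/-- `π_*` of a morphism, as a `Λ`-linear map. -/
def pmap {X Y : C} (φ : X ⟶ Y) : piSt C RR X →ₗ[Γ.Λ] piSt C RR Y where
  toFun := pmapA φ
  map_add' := map_add _
  map_smul' := by
    refine linearize Γ (pmapA φ) ?_
    intro i j f x
    rw [Γ.comp_smul_of, pmapA_of, pmapA_of, Γ.comp_smul_of]
    congr 1
    have nat : (shiftFunctorAdd C j i).inv.app X ≫ φ⟦j + i⟧'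
        = ((φ⟦j⟧')⟦i⟧') ≫ (shiftFunctorAdd C j i).inv.app Y :=
      ((shiftFunctorAdd C j i).inv.naturality φ).symm
    simp only [Category.assoc, Functor.map_comp]
    rw [nat]

lemma pmap_of {X Y : C} (φ : X ⟶ Y) (j : ℤ) (x : RR ⟶ X⟦j⟧) :
    pmap Γ φ (ofpi X j x) = ofpi Y j (x ≫ φ⟦j⟧') := pmapA_of φ j x

lemma pmap_ext {X Y : C} {F G : piSt C RR X →ₗ[Γ.Λ] piSt C RR Y}
    (h : ∀ j x, F (ofpi X j x) = G (ofpi X j x)) : F = G := by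
  ext ξ : 1
  induction ξ using DirectSum.induction_on with
  | zero => simp
  | of j x => exact h j x
  | add x y hx hy => simp [map_add, hx, hy]

lemma pmap_id {X : C} : pmap Γ (𝟙 X) = LinearMap.id := by
  refine pmap_ext Γ ?_
  intro j x
  simp [pmap_of]

lemma pmap_comp {X Y Z : C} (φ : X ⟶ Y) (ψ : Y ⟶ Z) :
    pmap Γ (φ ≫ ψ) = (pmap Γ ψ).comp (pmap Γ φ) := by
  refine pmap_ext Γ ?_
  intro j x
  simp [pmap_of]

lemma pmap_zero {X Y : C} : pmap Γ (0 : X ⟶ Y) = 0 := by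
  refine pmap_ext Γ ?_
  intro j x
  simp [pmap_of]

lemma pmap_component {X Y : C} (φ : X ⟶ Y) (ξ : piSt C RR X) (j : ℤ) :
    (pmap Γ φ ξ) j = ξ j ≫ φ⟦j⟧' := by
  induction ξ using DirectSum.induction_on with
  | zero => simp
  | of j' x =>
    rw [pmap_of]
    by_cases h : j' = j
    · subst h; rw [DirectSum.of_eq_same, DirectSum.of_eq_same]
    · rw [DirectSum.of_eq_of_ne _ _ _ (Ne.symm h), DirectSum.of_eq_of_ne _ _ _ (Ne.symm h), Limits.zero_comp]
  | add x y hx hy =>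
    rw [map_add, DirectSum.add_apply, DirectSum.add_apply, hx, hy, Preadditive.add_comp]

/-- The isomorphism of graded homs induced by an isomorphism. -/
def pequiv {X Y : C} (φ : X ≅ Y) : piSt C RR X ≃ₗ[Γ.Λ] piSt C RR Y :=
  LinearEquiv.ofLinear (pmap Γ φ.hom) (pmap Γ φ.inv)
    (by rw [← pmap_comp, φ.inv_hom_id, pmap_id])
    (by rw [← pmap_comp, φ.hom_inv_id, pmap_id])


section Shift

lemma sfa'_inv_app_congr {a b m b' m' : ℤ} (hb : b = b') (hm : m = m') (h : a + b = m) (X : C) :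
    (shiftFunctorAdd' C a b m h).inv.app X
      = eqToHom (show ((X⟦a⟧)⟦b⟧ : C) = (X⟦a⟧)⟦b'⟧ by rw [hb])
        ≫ (shiftFunctorAdd' C a b' m' (by omega)).inv.app X
        ≫ eqToHom (show (X⟦m'⟧ : C) = X⟦m⟧ by rw [hm]) := by
  subst hb; subst hm; simp

lemma sfa'_hom_app_congr {a b m b' m' : ℤ} (hb : b = b') (hm : m = m') (h : a + b = m) (X : C) :
    (shiftFunctorAdd' C a b m h).hom.app X
      = eqToHom (show (X⟦m⟧ : C) = X⟦m'⟧ by rw [hm])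
        ≫ (shiftFunctorAdd' C a b' m' (by omega)).hom.app X
        ≫ eqToHom (show ((X⟦a⟧)⟦b'⟧ : C) = (X⟦a⟧)⟦b⟧ by rw [hb]) := by
  subst hb; subst hm; simp

/-- Additive comparison `π_*(X⟦n⟧) → π_* X`. -/
def pshiftA (n : ℤ) (X : C) : piSt C RR (X⟦n⟧) →+ piSt C RR X :=
  DirectSum.toAddMonoid (fun j =>
    (DirectSum.of (fun i => RR ⟶ X⟦i⟧) (n + j)).comp
      (AddMonoidHom.mk' (fun x => x ≫ (shiftFunctorAdd C n j).inv.app X)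
        (fun a b => Preadditive.add_comp _ _ _ _ _ _)))

lemma pshiftA_of (n : ℤ) (X : C) (j : ℤ) (x : RR ⟶ (X⟦n⟧)⟦j⟧) :
    pshiftA (RR := RR) n X (ofpi (X⟦n⟧) j x)
      = ofpi X (n + j) (x ≫ (shiftFunctorAdd C n j).inv.app X) := by
  simp [pshiftA, ofpi]

/-- Additive comparison `π_* X → π_*(X⟦n⟧)`. -/
def pshiftB (n : ℤ) (X : C) : piSt C RR X →+ piSt C RR (X⟦n⟧) :=
  DirectSum.toAddMonoid (fun m =>
    (DirectSum.of (fun i => RR ⟶ (X⟦n⟧)⟦i⟧) (m - n)).comp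
      (AddMonoidHom.mk' (fun y => y ≫ (shiftFunctorAdd' C n (m - n) m (by omega)).hom.app X)
        (fun a b => Preadditive.add_comp _ _ _ _ _ _)))

lemma pshiftB_of (n : ℤ) (X : C) (m : ℤ) (y : RR ⟶ X⟦m⟧) :
    pshiftB (RR := RR) n X (ofpi X m y)
      = ofpi (X⟦n⟧) (m - n) (y ≫ (shiftFunctorAdd' C n (m - n) m (by omega)).hom.app X) := by
  simp [pshiftB, ofpi]

lemma pshiftBA (n : ℤ) (X : C) (ξ : piSt C RR (X⟦n⟧)) :
    pshiftB (RR := RR) n X (pshiftA (RR := RR) n X ξ) = ξ := by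
  induction ξ using DirectSum.induction_on with
  | zero => simp
  | of j x =>
    rw [pshiftA_of, pshiftB_of]
    rw [sfa'_hom_app_congr (show n + j - n = j by omega) (rfl) _ X]
    rw [ofpi_cast (show n + j - n = j by omega)]
    congr 1
    simp only [eqToHom_refl, Category.id_comp, Category.assoc, eqToHom_trans, eqToHom_refl,
      Category.comp_id]
    rw [← shiftFunctorAdd'_eq_shiftFunctorAdd]
    rw [Iso.inv_hom_id_app]
    simp
  | add x y hx hy => rw [map_add, map_add, hx, hy]

lemma pshiftAB (n : ℤ) (X : C) (ξ : piSt C RR X) :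
    pshiftA (RR := RR) n X (pshiftB (RR := RR) n X ξ) = ξ := by
  induction ξ using DirectSum.induction_on with
  | zero => simp
  | of m y =>
    rw [pshiftB_of, pshiftA_of]
    rw [show (shiftFunctorAdd C n (m - n)) = shiftFunctorAdd' C n (m - n) (n + (m - n)) rfl from
      (shiftFunctorAdd'_eq_shiftFunctorAdd C n (m - n)).symm]
    rw [sfa'_inv_app_congr (rfl) (show n + (m - n) = m by omega) _ X]
    rw [ofpi_cast (show n + (m - n) = m by omega)]
    congr 1
    simp only [eqToHom_refl, Category.id_comp, Category.assoc, eqToHom_trans, eqToHom_refl,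
      Category.comp_id]
    rw [Iso.hom_inv_id_app]
    simp
  | add x y hx hy => rw [map_add, map_add, hx, hy]

lemma pshiftA_smul (n : ℤ) (X : C) :
    ∀ (c : Γ.Λ) (x : piSt C RR (X⟦n⟧)),
      pshiftA (RR := RR) n X (c • x) = c • pshiftA (RR := RR) n X x := by
  refine linearize Γ (pshiftA n X) ?_
  intro i j f x
  rw [Γ.comp_smul_of, pshiftA_of, pshiftA_of, Γ.comp_smul_of]
  -- LHS : of (n+(j+i)) (f ≫ x⟦i⟧ ≫ (add j i).inv.app (X⟦n⟧) ≫ (add n (j+i)).inv.app X)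
  -- RHS : of ((n+j)+i) (f ≫ (x ≫ (add n j).inv.app X)⟦i⟧ ≫ (add (n+j) i).inv.app X)
  have assoc := shiftFunctorAdd'_assoc_inv_app n j i (n + j) (j + i) (n + j + i)
    rfl rfl rfl X
  rw [show shiftFunctorAdd C n (j + i) = shiftFunctorAdd' C n (j + i) (n + (j + i)) rfl from
    (shiftFunctorAdd'_eq_shiftFunctorAdd C n (j + i)).symm]
  rw [sfa'_inv_app_congr (rfl) (show n + j + i = n + (j + i) by omega).symm _ X]
  rw [ofpi_cast (show n + (j + i) = n + j + i by omega)]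
  congr 1
  simp only [eqToHom_refl, Category.id_comp, Category.assoc, eqToHom_trans, eqToHom_refl,
    Category.comp_id, Functor.map_comp]
  rw [show (shiftFunctorAdd C j i) = shiftFunctorAdd' C j i (j + i) rfl from
    (shiftFunctorAdd'_eq_shiftFunctorAdd C j i).symm]
  rw [show (shiftFunctorAdd C n j) = shiftFunctorAdd' C n j (n + j) rfl from
    (shiftFunctorAdd'_eq_shiftFunctorAdd C n j).symm]
  rw [show (shiftFunctorAdd C (n + j) i) = shiftFunctorAdd' C (n + j) i (n + j + i) rfl from
    (shiftFunctorAdd'_eq_shiftFunctorAdd C (n + j) i).symm]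
  rw [← assoc]

/-- The linear comparison equivalence `π_*(X⟦n⟧) ≃ π_* X`. -/
def pshift (n : ℤ) (X : C) : piSt C RR (X⟦n⟧) ≃ₗ[Γ.Λ] piSt C RR X where
  toFun := pshiftA (RR := RR) n X
  map_add' := map_add _
  map_smul' := pshiftA_smul Γ n X
  invFun := pshiftB (RR := RR) n X
  left_inv := pshiftBA n X
  right_inv := pshiftAB n X

end Shift

section Sigma

/-- The canonical element `1 ∈ π_* R`. -/
def unitE : piSt C RR RR := ofpi RR 0 ((shiftFunctorZero C ℤ).inv.app RR)

/-- `σ : Λ → π_* R`, `c ↦ c • 1`. -/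
def sigmaL : Γ.Λ →ₗ[Γ.Λ] piSt C RR RR := LinearMap.toSpanSingleton Γ.Λ _ (unitE (RR := RR))

lemma sigmaL_symm_eq (μ : piSt C RR RR) : sigmaL Γ (Γ.eΛ.symm μ) = μ := by
  induction μ using DirectSum.induction_on with
  | zero => simp [sigmaL]
  | of i f =>
    show Γ.eΛ.symm (ofpi RR i f) • (unitE (RR := RR)) = ofpi RR i f
    rw [unitE, Γ.comp_smul_of]
    rw [shiftFunctorAdd_zero_add_inv_app]
    rw [dof_cast (show (0 : ℤ) + i = i by omega)]
    congr 1
    simp only [Category.assoc, eqToHom_trans]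
    rw [← Functor.map_comp_assoc, Iso.inv_hom_id_app]
    simp
  | add x y hx hy =>
    rw [map_add]
    show sigmaL Γ _ = _
    rw [map_add, hx, hy]

lemma sigmaL_eq (c : Γ.Λ) : sigmaL Γ c = Γ.eΛ c := by
  have := sigmaL_symm_eq Γ (Γ.eΛ c)
  simpa using this

/-- `Λ ≃ π_* R` as modules. -/
noncomputable def sigmaEquiv : Γ.Λ ≃ₗ[Γ.Λ] piSt C RR RR :=
  LinearEquiv.ofBijective (sigmaL Γ) (by
    have h : ⇑(sigmaL Γ) = ⇑Γ.eΛ := funext (sigmaL_eq Γ)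
    rw [show Function.Bijective (sigmaL Γ) ↔ Function.Bijective ⇑Γ.eΛ by rw [h]]
    exact Γ.eΛ.bijective)

end Sigma


section RangeKer

lemma pmap_surj_iff {X Y : C} (φ : X ⟶ Y) :
    Function.Surjective (pmap Γ φ) ↔
      ∀ (j : ℤ) (y : RR ⟶ Y⟦j⟧), ∃ x : RR ⟶ X⟦j⟧, x ≫ φ⟦j⟧' = y := by
  constructor
  · intro h j y
    obtain ⟨ξ, hξ⟩ := h (ofpi Y j y)
    refine ⟨ξ j, ?_⟩
    have := congrArg (fun ζ : piSt C RR Y => ζ j) hξ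
    simp only at this
    rw [pmap_component] at this
    rwa [DirectSum.of_eq_same] at this
  · intro h ξ
    classical
    have : ξ ∈ LinearMap.range (pmap Γ φ) := by
      rw [← DirectSum.sum_support_of ξ]
      apply Submodule.sum_mem
      intro j hj
      obtain ⟨x, hx⟩ := h j (ξ j)
      exact ⟨ofpi X j x, by rw [pmap_of, hx]⟩
    exact this

lemma range_pmap_eq_ker {X Y Z : C} (φ : X ⟶ Y) (ψ : Y ⟶ Z) (h0 : φ ≫ ψ = 0)
    (hlift : ∀ (j : ℤ) (y : RR ⟶ Y⟦j⟧), y ≫ ψ⟦j⟧' = 0 → ∃ x, x ≫ φ⟦j⟧' = y) :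
    LinearMap.range (pmap Γ φ) = LinearMap.ker (pmap Γ ψ) := by
  apply le_antisymm
  · rintro _ ⟨ξ, rfl⟩
    rw [LinearMap.mem_ker, ← LinearMap.comp_apply, ← pmap_comp, h0, pmap_zero]
    rfl
  · intro ξ hξ
    classical
    have hcomp : ∀ j, ξ j ≫ ψ⟦j⟧' = 0 := by
      intro j
      have := congrArg (fun ζ : piSt C RR Z => ζ j) (LinearMap.mem_ker.mp hξ)
      simp only at this
      rw [pmap_component] at this
      simpa using this
    rw [← DirectSum.sum_support_of ξ]
    apply Submodule.sum_mem
    intro j hj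
    obtain ⟨x, hx⟩ := hlift j (ξ j) (hcomp j)
    exact ⟨ofpi X j x, by rw [pmap_of, hx]⟩

end RangeKer


section Small

variable (RR) in
lemma finBuilds_isThick : IsThickClass C (FinBuilds C RR) :=
  ⟨fun X Y e h => fun P hP hR => hP.1 X Y e (h P hP hR),
   fun n X h => fun P hP hR => hP.2.1 n X (h P hP hR),
   fun X Y r h => fun P hP hR => hP.2.2.1 X Y r (h P hP hR),
   fun T hT h1 h2 => fun P hP hR => hP.2.2.2 T hT (h1 P hP hR) (h2 P hP hR)⟩

variable (RR) in
lemma finBuilds_self : FinBuilds C RR RR := fun _ _ h => h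

variable (RR) in
lemma finBuilds_zero : FinBuilds C RR (0 : C) := fun P hP hR =>
  hP.2.2.1 _ RR ⟨0, 0, by simp⟩ hR

lemma finBuilds_shift {X : C} (n : ℤ) (h : FinBuilds C RR X) : FinBuilds C RR (X⟦n⟧) :=
  (finBuilds_isThick RR).2.1 n X h

lemma finBuilds_iso {X Y : C} (e : X ≅ Y) (h : FinBuilds C RR X) : FinBuilds C RR Y :=
  (finBuilds_isThick RR).1 X Y e h

lemma finBuilds_cone (T : Triangle C) (hT : T ∈ distTriang C)
    (h1 : FinBuilds C RR T.obj₁) (h2 : FinBuilds C RR T.obj₂) : FinBuilds C RR T.obj₃ :=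
  (finBuilds_isThick RR).2.2.2 T hT h1 h2

lemma finBuilds_biprod {X Y : C} (hX : FinBuilds C RR X) (hY : FinBuilds C RR Y) :
    FinBuilds C RR (X ⊞ Y) := by
  have hT := inv_rot_of_distTriang _ (binaryBiproductTriangle_distinguished X Y)
  exact finBuilds_cone _ hT (finBuilds_shift _ hY) hX

end Small

section Exactness

lemma comp_exact_of_dist (T : Triangle C) (hT : T ∈ distTriang C) (j : ℤ)
    (y : RR ⟶ (T.obj₂⟦j⟧ : C)) (hy : y ≫ T.mor₂⟦j⟧' = 0) :
    ∃ x : RR ⟶ (T.obj₁⟦j⟧ : C), x ≫ T.mor₁⟦j⟧' = y := by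
  have hT' : (Triangle.shiftFunctor C j).obj T ∈ distTriang C :=
    Triangle.shift_distinguished T hT j
  obtain ⟨x, hx⟩ := Triangle.coyoneda_exact₂ _ hT' y (by
    show y ≫ (j.negOnePow • T.mor₂⟦j⟧') = 0
    rw [Linear.comp_units_smul, hy, smul_zero])
  refine ⟨j.negOnePow • x, ?_⟩
  erw [Linear.units_smul_comp]
  change y = x ≫ (j.negOnePow • T.mor₁⟦j⟧') at hx
  erw [Linear.comp_units_smul] at hx
  exact hx.symm

end Exactness


section FP

/-- `π_* X` is a finitely presented `Λ`-module. -/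
def FPhtpy (X : C) : Prop := Module.FinitePresentation Γ.Λ (piSt C RR X)

lemma fphtpy_RR : FPhtpy Γ RR :=
  fp_of_equiv (sigmaEquiv Γ) inferInstance

lemma fphtpy_iso {X Y : C} (e : X ≅ Y) (h : FPhtpy Γ X) : FPhtpy Γ Y :=
  fp_of_equiv (pequiv Γ e) h

lemma fphtpy_shift (n : ℤ) {X : C} (h : FPhtpy Γ X) : FPhtpy Γ (X⟦n⟧) :=
  fp_of_equiv (pshift Γ n X).symm h

lemma fphtpy_unshift (n : ℤ) {X : C} (h : FPhtpy Γ (X⟦n⟧)) : FPhtpy Γ X :=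
  fp_of_equiv (pshift Γ n X) h

lemma fphtpy_retract {X Y : C} (s : X ⟶ Y) (r : Y ⟶ X) (hsr : s ≫ r = 𝟙 X)
    (h : FPhtpy Γ Y) : FPhtpy Γ X :=
  fp_of_retract (pmap Γ s) (pmap Γ r) (by rw [← pmap_comp, hsr, pmap_id]) h

lemma fphtpy_cone (hcoh : IsCoherentRing Γ.Λ) (T : Triangle C) (hT : T ∈ distTriang C)
    (h1 : FPhtpy Γ T.obj₁) (h2 : FPhtpy Γ T.obj₂) : FPhtpy Γ T.obj₃ := by
  have e1 : LinearMap.range (pmap Γ T.mor₁) = LinearMap.ker (pmap Γ T.mor₂) :=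
    range_pmap_eq_ker Γ _ _ (comp_distTriang_mor_zero₁₂ T hT)
      (fun j y hy => comp_exact_of_dist T hT j y hy)
  have e2 : LinearMap.range (pmap Γ T.mor₂) = LinearMap.ker (pmap Γ T.mor₃) :=
    range_pmap_eq_ker Γ _ _ (comp_distTriang_mor_zero₂₃ T hT)
      (fun j y hy => comp_exact_of_dist T.rotate (rot_of_distTriang T hT) j y hy)
  have e3 : LinearMap.range (pmap Γ T.mor₃)
      = LinearMap.ker (pmap Γ ((T.mor₁)⟦(1 : ℤ)⟧')) :=
    range_pmap_eq_ker Γ _ _ (comp_distTriang_mor_zero₃₁ T hT) (by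
      intro j y hy
      have hy' : y ≫ (T.rotate.rotate.mor₂)⟦j⟧' = 0 := by
        show y ≫ (-((T.mor₁)⟦(1 : ℤ)⟧'))⟦j⟧' = 0
        rw [Functor.map_neg, Preadditive.comp_neg, hy, neg_zero]
      exact comp_exact_of_dist T.rotate.rotate
        (rot_of_distTriang _ (rot_of_distTriang T hT)) j y hy')
  haveI hB : Module.FinitePresentation Γ.Λ (piSt C RR T.obj₂) := h2
  haveI hA : Module.Finite Γ.Λ (piSt C RR T.obj₁) := by
    haveI : Module.FinitePresentation Γ.Λ (piSt C RR T.obj₁) := h1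
    infer_instance
  have hD : Module.FinitePresentation Γ.Λ (piSt C RR ((T.obj₁)⟦(1 : ℤ)⟧)) :=
    fphtpy_shift Γ 1 h1
  have hE : Module.FinitePresentation Γ.Λ (piSt C RR ((T.obj₂)⟦(1 : ℤ)⟧)) :=
    fphtpy_shift Γ 1 h2
  exact fp_of_exact hcoh (pmap Γ T.mor₁) (pmap Γ T.mor₂) (pmap Γ T.mor₃)
    (pmap Γ ((T.mor₁)⟦(1 : ℤ)⟧')) e1 e2 e3 hA hB hD hE

lemma fphtpy_thick (hcoh : IsCoherentRing Γ.Λ) : IsThickClass C (FPhtpy Γ) :=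
  ⟨fun _ _ e h => fphtpy_iso Γ e h,
   fun n X h => fphtpy_shift Γ n h,
   fun _ _ ⟨s, r, hsr⟩ h => fphtpy_retract Γ s r hsr h,
   fun T hT h1 h2 => fphtpy_cone Γ hcoh T hT h1 h2⟩

lemma fphtpy_of_small (hcoh : IsCoherentRing Γ.Λ) {X : C} (h : FinBuilds C RR X) :
    FPhtpy Γ X := h _ (fphtpy_thick Γ hcoh) (fphtpy_RR Γ)

end FP


section TrE

/-- Translation `Hom(ΣⁱR, Y) ≃ Hom(R, Σ⁻ⁱY)`. -/
def trE (i : ℤ) (Y : C) : ((RR⟦i⟧ : C) ⟶ Y) ≃ (RR ⟶ (Y⟦-i⟧ : C)) :=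
  (shiftEquiv C i).toAdjunction.homEquiv RR Y

lemma trE_natural (i : ℤ) {Y Z : C} (w : (RR⟦i⟧ : C) ⟶ Y) (g : Y ⟶ Z) :
    trE (RR := RR) i Z (w ≫ g) = trE (RR := RR) i Y w ≫ g⟦(-i : ℤ)⟧' :=
  Adjunction.homEquiv_naturality_right _ _ _

lemma trE_zero (i : ℤ) (Y : C) : trE (RR := RR) i Y 0 = 0 := by
  show ((shiftEquiv C i).toAdjunction.homEquiv RR Y) 0 = 0
  rw [Adjunction.homEquiv_unit]
  simp

lemma shift_surj_of_comp_surj {l X : C} (u : l ⟶ X)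
    (h : ∀ (j : ℤ) (y : RR ⟶ (X⟦j⟧ : C)), ∃ x : RR ⟶ (l⟦j⟧ : C), x ≫ u⟦j⟧' = y) :
    ∀ (i : ℤ) (v : (RR⟦i⟧ : C) ⟶ X), ∃ w : (RR⟦i⟧ : C) ⟶ l, w ≫ u = v := by
  intro i v
  obtain ⟨x, hx⟩ := h (-i) (trE (RR := RR) i X v)
  refine ⟨(trE (RR := RR) i l).symm x, ?_⟩
  apply (trE (RR := RR) i X).injective
  rw [trE_natural, Equiv.apply_symm_apply, hx]

lemma comp_surj_of_shift_surj {l X : C} (u : l ⟶ X) (i j : ℤ) (hij : -i = j)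
    (h : ∀ v : (RR⟦i⟧ : C) ⟶ X, ∃ w : (RR⟦i⟧ : C) ⟶ l, w ≫ u = v) :
    ∀ y : RR ⟶ (X⟦j⟧ : C), ∃ x : RR ⟶ (l⟦j⟧ : C), x ≫ u⟦j⟧' = y := by
  subst hij
  intro y
  obtain ⟨w, hw⟩ := h ((trE (RR := RR) i X).symm y)
  refine ⟨trE (RR := RR) i l w, ?_⟩
  rw [← trE_natural, hw, Equiv.apply_symm_apply]

lemma comp_lift_of_shift_lift {l m X : C} (w : l ⟶ m) (u : m ⟶ X) (i j : ℤ) (hij : -i = j)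
    (h : ∀ v : (RR⟦i⟧ : C) ⟶ m, v ≫ u = 0 → ∃ t : (RR⟦i⟧ : C) ⟶ l, t ≫ w = v) :
    ∀ y : RR ⟶ (m⟦j⟧ : C), y ≫ u⟦j⟧' = 0 → ∃ t : RR ⟶ (l⟦j⟧ : C), t ≫ w⟦j⟧' = y := by
  subst hij
  intro y hy
  have hv : ((trE (RR := RR) i m).symm y) ≫ u = 0 := by
    apply (trE (RR := RR) i X).injective
    rw [trE_natural, Equiv.apply_symm_apply, hy, trE_zero]
  obtain ⟨t, ht⟩ := h _ hv
  refine ⟨trE (RR := RR) i l t, ?_⟩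
  rw [← trE_natural, ht, Equiv.apply_symm_apply]

end TrE

section Realize

lemma realize_one {X : C} (d : ℤ) (x : RR ⟶ (X⟦d⟧ : C)) :
    ∃ (l : C) (_ : FinBuilds C RR l) (u : l ⟶ X),
      ofpi X d x ∈ LinearMap.range (pmap Γ u) := by
  refine ⟨RR⟦(-d : ℤ)⟧, finBuilds_shift (-d) (finBuilds_self RR),
    x⟦(-d : ℤ)⟧' ≫ (shiftFunctorCompIsoId C d (-d) (add_neg_cancel d)).hom.app X, ?_⟩
  refine ⟨ofpi _ d ((shiftFunctorCompIsoId C (-d) d (neg_add_cancel d)).inv.app RR), ?_⟩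
  rw [pmap_of]
  congr 1
  rw [Functor.map_comp, shift_neg_shift' x d]
  rw [shift_shiftFunctorCompIsoId_add_neg_cancel_hom_app]
  simp

lemma realize_finset {X : C} (s : Finset (piSt C RR X)) :
    ∃ (l : C) (_ : FinBuilds C RR l) (u : l ⟶ X),
      (s : Set (piSt C RR X)) ⊆ (LinearMap.range (pmap Γ u) : Set (piSt C RR X)) := by
  classical
  induction s using Finset.induction_on with
  | empty => exact ⟨0, finBuilds_zero RR, 0, by simp⟩
  | @insert a s ha IH =>
    obtain ⟨l₁, h₁, u₁, hs₁⟩ := IH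
    have haux : ∀ t : Finset ℤ, ∃ (l : C) (_ : FinBuilds C RR l) (u : l ⟶ X),
        ∀ j ∈ t, ofpi X j (a j) ∈ LinearMap.range (pmap Γ u) := by
      intro t
      induction t using Finset.induction_on with
      | empty => exact ⟨0, finBuilds_zero RR, 0, by simp⟩
      | @insert j t hj IHt =>
        obtain ⟨l₂, h₂, u₂, h2⟩ := IHt
        obtain ⟨l₃, h₃, u₃, h3⟩ := realize_one Γ j (a j)
        refine ⟨l₂ ⊞ l₃, finBuilds_biprod h₂ h₃, biprod.desc u₂ u₃, ?_⟩
        intro j' hj'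
        rcases Finset.mem_insert.mp hj' with rfl | hj''
        · obtain ⟨ξ, hξ⟩ := h3
          exact ⟨pmap Γ biprod.inr ξ, by
            rw [← LinearMap.comp_apply, ← pmap_comp, biprod.inr_desc, hξ]⟩
        · obtain ⟨ξ, hξ⟩ := h2 j' hj''
          exact ⟨pmap Γ biprod.inl ξ, by
            rw [← LinearMap.comp_apply, ← pmap_comp, biprod.inl_desc, hξ]⟩
    obtain ⟨l₀, h₀, u₀, h0⟩ := haux a.support
    refine ⟨l₁ ⊞ l₀, finBuilds_biprod h₁ h₀, biprod.desc u₁ u₀, ?_⟩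
    intro b hb
    rcases Finset.mem_insert.mp hb with rfl | hb'
    · show b ∈ LinearMap.range (pmap Γ (biprod.desc u₁ u₀))
      rw [← DirectSum.sum_support_of b]
      apply Submodule.sum_mem
      intro j hjs
      obtain ⟨ξ, hξ⟩ := h0 j hjs
      exact ⟨pmap Γ biprod.inr ξ, by
        rw [← LinearMap.comp_apply, ← pmap_comp, biprod.inr_desc, hξ]⟩
    · obtain ⟨ξ, hξ⟩ := hs₁ hb'
      exact ⟨pmap Γ biprod.inl ξ, by
        rw [← LinearMap.comp_apply, ← pmap_comp, biprod.inl_desc, hξ]⟩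

lemma realize_surj {X : C} (hfg : Module.Finite Γ.Λ (piSt C RR X)) :
    ∃ (l : C) (_ : FinBuilds C RR l) (u : l ⟶ X), Function.Surjective (pmap Γ u) := by
  obtain ⟨s, hs⟩ := hfg.fg_top
  obtain ⟨l, hl, u, hsub⟩ := realize_finset Γ s
  refine ⟨l, hl, u, ?_⟩
  rw [← LinearMap.range_eq_top]
  rw [← top_le_iff, ← hs]
  exact Submodule.span_le.mpr hsub

end Realize


section Gpred

/-- The key predicate: for every `X` with finitely presented homotopy, maps
from shifts of `c` to `X` can be caught by a small object over `X`. -/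
def Gpred (c : C) : Prop := ∀ X : C, FPhtpy Γ X →
  ∃ (l : C) (_ : FinBuilds C RR l) (u : l ⟶ X),
    ∀ (i : ℤ) (v : (c⟦i⟧ : C) ⟶ X), ∃ w : (c⟦i⟧ : C) ⟶ l, w ≫ u = v

lemma gpred_RR : Gpred Γ RR := by
  intro X hX
  have hfg : Module.Finite Γ.Λ (piSt C RR X) := by
    haveI : Module.FinitePresentation Γ.Λ (piSt C RR X) := hX
    infer_instance
  obtain ⟨l, hl, u, hu⟩ := realize_surj Γ hfg
  exact ⟨l, hl, u, shift_surj_of_comp_surj u ((pmap_surj_iff Γ u).mp hu)⟩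

lemma gpred_iso {c c' : C} (e : c ≅ c') (h : Gpred Γ c) : Gpred Γ c' := by
  intro X hX
  obtain ⟨l, hl, u, hu⟩ := h X hX
  refine ⟨l, hl, u, ?_⟩
  intro i v
  obtain ⟨w, hw⟩ := hu i (e.hom⟦i⟧' ≫ v)
  refine ⟨e.inv⟦i⟧' ≫ w, ?_⟩
  rw [Category.assoc, hw, ← Category.assoc, ← Functor.map_comp, e.inv_hom_id]
  simp

lemma gpred_retract {c c' : C} (s : c ⟶ c') (r : c' ⟶ c) (hsr : s ≫ r = 𝟙 c)
    (h : Gpred Γ c') : Gpred Γ c := by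
  intro X hX
  obtain ⟨l, hl, u, hu⟩ := h X hX
  refine ⟨l, hl, u, ?_⟩
  intro i v
  obtain ⟨w, hw⟩ := hu i (r⟦i⟧' ≫ v)
  refine ⟨s⟦i⟧' ≫ w, ?_⟩
  rw [Category.assoc, hw, ← Category.assoc, ← Functor.map_comp, hsr]
  simp

lemma gpred_shift {c : C} (n : ℤ) (h : Gpred Γ c) : Gpred Γ (c⟦n⟧) := by
  intro X hX
  obtain ⟨l, hl, u, hu⟩ := h X hX
  refine ⟨l, hl, u, ?_⟩
  intro i v
  obtain ⟨w, hw⟩ := hu (n + i) ((shiftFunctorAdd C n i).hom.app c ≫ v)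
  refine ⟨(shiftFunctorAdd C n i).inv.app c ≫ w, ?_⟩
  rw [Category.assoc, hw, Iso.inv_hom_id_app_assoc]

/-- From the surjectivity predicate we get the kernel-lifting property,
by passing to the fibre. -/
lemma gpred_lift (hcoh : IsCoherentRing Γ.Λ) {c : C} (hc : Gpred Γ c) {m X : C}
    (hm : FinBuilds C RR m) (hX : FPhtpy Γ X) (u : m ⟶ X) :
    ∃ (l : C) (_ : FinBuilds C RR l) (w : l ⟶ m), w ≫ u = 0 ∧
      ∀ (i : ℤ) (v : (c⟦i⟧ : C) ⟶ m), v ≫ u = 0 → ∃ t : (c⟦i⟧ : C) ⟶ l, t ≫ w = v := by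
  obtain ⟨K, p, h, hTdist⟩ := distinguished_cocone_triangle₁ u
  have hK : FPhtpy Γ K := by
    have h1 : FPhtpy Γ ((K⟦(1 : ℤ)⟧ : C)) := by
      have := fphtpy_cone Γ hcoh (Triangle.mk p u h).rotate (rot_of_distTriang _ hTdist)
        (fphtpy_of_small Γ hcoh hm) hX
      exact this
    exact fphtpy_unshift Γ 1 h1
  obtain ⟨l, hl, t, ht⟩ := hc K hK
  refine ⟨l, hl, t ≫ p, ?_, ?_⟩
  · have hpu : p ≫ u = 0 := comp_distTriang_mor_zero₁₂ _ hTdist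
    rw [Category.assoc, hpu, comp_zero]
  · intro i v hv
    obtain ⟨vv, hvv⟩ := Triangle.coyoneda_exact₂ _ hTdist v hv
    have hvv' : v = vv ≫ p := hvv
    obtain ⟨τ, hτ⟩ := ht i vv
    refine ⟨τ, ?_⟩
    rw [← Category.assoc, hτ]; exact hvv'.symm

lemma gpred_cone (hcoh : IsCoherentRing Γ.Λ) (T : Triangle C) (hT : T ∈ distTriang C)
    (h1 : Gpred Γ T.obj₁) (h2 : Gpred Γ T.obj₂) : Gpred Γ T.obj₃ := by
  intro X hX
  obtain ⟨l₂, hl₂, u₂, hu₂⟩ := h2 X hX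
  obtain ⟨l', hl', w, hw0, hwlift⟩ := gpred_lift Γ hcoh h1 hl₂ hX u₂
  obtain ⟨l₃, e, δ, hT₃⟩ := distinguished_cocone_triangle w
  obtain ⟨u₃, hu₃x⟩ := Triangle.yoneda_exact₂ _ hT₃ u₂ hw0
  have hu₃ : u₂ = e ≫ u₃ := hu₃x
  have hwe0 : w ≫ e = 0 := comp_distTriang_mor_zero₁₂ _ hT₃
  have hl₃ : FinBuilds C RR l₃ := finBuilds_cone _ hT₃ hl' hl₂
  obtain ⟨l₁, hl₁, u₁, hu₁⟩ := h1 X hX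
  refine ⟨l₃ ⊞ l₁, finBuilds_biprod hl₃ hl₁, biprod.desc u₃ u₁, ?_⟩
  intro i v
  obtain ⟨w₂, hw₂⟩ := hu₂ i (T.mor₂⟦i⟧' ≫ v)
  have hfw : (T.mor₁⟦i⟧' ≫ w₂) ≫ u₂ = 0 := by
    rw [Category.assoc, hw₂, ← Category.assoc, ← Functor.map_comp,
      comp_distTriang_mor_zero₁₂ _ hT, Functor.map_zero, Limits.zero_comp]
  obtain ⟨τ, hτ⟩ := hwlift i (T.mor₁⟦i⟧' ≫ w₂) hfw
  have hwe : T.mor₁⟦i⟧' ≫ (w₂ ≫ e) = 0 := by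
    rw [← Category.assoc, ← hτ, Category.assoc, hwe0, comp_zero]
  -- shifted triangle
  have hTs : (Triangle.shiftFunctor C i).obj T ∈ distTriang C :=
    Triangle.shift_distinguished T hT i
  obtain ⟨g, hg⟩ := Triangle.yoneda_exact₂ _ hTs (w₂ ≫ e) (by
    show (i.negOnePow • T.mor₁⟦i⟧') ≫ (w₂ ≫ e) = 0
    rw [Linear.units_smul_comp, hwe, smul_zero])
  set V : (T.obj₃⟦i⟧ : C) ⟶ l₃ := i.negOnePow • g with hV
  have hbV : T.mor₂⟦i⟧' ≫ V = w₂ ≫ e := by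
    erw [hV, Linear.comp_units_smul]
    change (w₂ ≫ e) = (i.negOnePow • T.mor₂⟦i⟧') ≫ g at hg
    erw [Linear.units_smul_comp] at hg
    rw [← hg]
  have hres : T.mor₂⟦i⟧' ≫ (v - V ≫ u₃) = 0 := by
    erw [Preadditive.comp_sub, ← Category.assoc, hbV, Category.assoc, ← hu₃, hw₂, sub_self]
  obtain ⟨ρ, hρ⟩ := Triangle.yoneda_exact₃ _ hTs (v - V ≫ u₃) (by
    show (i.negOnePow • T.mor₂⟦i⟧') ≫ (v - V ≫ u₃) = 0
    rw [Linear.units_smul_comp, hres, smul_zero])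
  obtain ⟨τ₁, hτ₁⟩ := hu₁ (i + 1) ((shiftFunctorAdd C i 1).hom.app T.obj₁ ≫ ρ)
  refine ⟨biprod.lift V (((Triangle.shiftFunctor C i).obj T).mor₃
    ≫ (shiftFunctorAdd C i 1).inv.app T.obj₁ ≫ τ₁), ?_⟩
  erw [biprod.lift_desc]
  have hρ' : ((Triangle.shiftFunctor C i).obj T).mor₃
      ≫ (shiftFunctorAdd C i 1).inv.app T.obj₁ ≫ τ₁ ≫ u₁ = v - V ≫ u₃ := by
    erw [hτ₁, Iso.inv_hom_id_app_assoc, ← hρ]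
  erw [Category.assoc, Category.assoc, hρ']
  abel

lemma gpred_thick (hcoh : IsCoherentRing Γ.Λ) : IsThickClass C (Gpred Γ) :=
  ⟨fun _ _ e h => gpred_iso Γ e h,
   fun n _ h => gpred_shift Γ n h,
   fun _ _ ⟨s, r, hsr⟩ h => gpred_retract Γ s r hsr h,
   fun T hT h1 h2 => gpred_cone Γ hcoh T hT h1 h2⟩

lemma gpred_of_small (hcoh : IsCoherentRing Γ.Λ) {c : C} (h : FinBuilds C RR c) :
    Gpred Γ c := h _ (gpred_thick Γ hcoh) (gpred_RR Γ)

end Gpred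

end Cat

/-- Lemma 3.7 / `lem_k_fp`.
Let `R` be a ring spectrum with augmentation `R → k` (`k` a field) which is
surjective on homotopy, with augmentation ideal `I` defined by the triangle
`I → R → k`, and suppose `R_*` is coherent.  Here `C` models `D(R)`, `RR` and
`kR` are the modules `R` and `k`, `ε : RR ⟶ kR` is the augmentation, `Γ`
packages the coefficient ring `R_*`, and `aug : R_* → k_*` is the map induced
by `ε` on homotopy (so `I_* = ker aug`).  Then the following are equivalent:
(1) `k` is cohomologically locally finitely presented in `D(R)` (with respect
to `D^c(R) = Thick(R)`);
(2) `k` is a finitely presented `R_*`-module;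
(3) `I_* = ker(R_* → k_*)` is a finitely generated `R_*`-module. -/
theorem k_clfp_iff_fp_iff_augmentation_ideal_fg
    (C : Type u) [Category.{v} C] [HasZeroObject C] [Preadditive C]
    [HasShift C ℤ] [∀ n : ℤ, (shiftFunctor C n).Additive] [Pretriangulated C]
    (RR kR : C) (ε : RR ⟶ kR)
    (Γ : GradedHomData C RR)
    (aug : Γ.Λ →ₗ[Γ.Λ] piSt C RR kR)
    (haug : ∀ (i : ℤ) (x : RR ⟶ (RR⟦i⟧)),
      aug (Γ.eΛ.symm (DirectSum.of (fun n => RR ⟶ (RR⟦n⟧)) i x))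
        = DirectSum.of (fun n => RR ⟶ (kR⟦n⟧)) i (x ≫ (ε⟦i⟧')))
    (hsurj : Function.Surjective aug)
    (hcoh : IsCoherentRing Γ.Λ) :
    (CLFP C (FinBuilds C RR) kR ↔ IsFPModule Γ.Λ (piSt C RR kR)) ∧
    (IsFPModule Γ.Λ (piSt C RR kR) ↔ (LinearMap.ker aug).FG) := by
  constructor
  · constructor
    · rintro ⟨hclfg, hclfp⟩
      obtain ⟨l, hl, u, hu⟩ := hclfg RR (finBuilds_self RR)
      have hcomp : ∀ (j : ℤ) (y : RR ⟶ (kR⟦j⟧ : C)), ∃ x : RR ⟶ (l⟦j⟧ : C), x ≫ u⟦j⟧' = y :=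
        fun j => comp_surj_of_shift_surj u (-j) j (neg_neg j) (fun v => hu (-j) v)
      have husurj : Function.Surjective (pmap Γ u) := (pmap_surj_iff Γ u).mpr hcomp
      obtain ⟨l', hl', w, hw0, hlift⟩ := hclfp l hl u RR (finBuilds_self RR)
      have hcomplift : ∀ (j : ℤ) (y : RR ⟶ (l⟦j⟧ : C)), y ≫ u⟦j⟧' = 0 →
          ∃ t : RR ⟶ (l'⟦j⟧ : C), t ≫ w⟦j⟧' = y :=
        fun j => comp_lift_of_shift_lift w u (-j) j (neg_neg j) (fun v hv => hlift (-j) v hv)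
      have hrk : LinearMap.range (pmap Γ w) = LinearMap.ker (pmap Γ u) :=
        range_pmap_eq_ker Γ w u hw0 hcomplift
      haveI hFPl : Module.FinitePresentation Γ.Λ (piSt C RR l) := fphtpy_of_small Γ hcoh hl
      haveI hFPl' : Module.FinitePresentation Γ.Λ (piSt C RR l') := fphtpy_of_small Γ hcoh hl'
      have hkerfg : (LinearMap.ker (pmap Γ u)).FG := by
        rw [← hrk, ← Submodule.map_top]
        haveI : Module.Finite Γ.Λ (piSt C RR l') := inferInstance
        exact Submodule.FG.map _ Module.Finite.fg_top
      exact isFPModule_iff.mpr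
        (Module.finitePresentation_of_surjective (pmap Γ u) husurj hkerfg)
    · intro h
      have hfpk : FPhtpy Γ kR := isFPModule_iff.mp h
      constructor
      · intro c hc
        exact (gpred_of_small Γ hcoh hc) kR hfpk
      · intro m hm u c hc
        exact gpred_lift Γ hcoh (gpred_of_small Γ hcoh hc) hm hfpk u
  · constructor
    · intro h
      haveI : Module.FinitePresentation Γ.Λ (piSt C RR kR) := isFPModule_iff.mp h
      exact Module.FinitePresentation.fg_ker aug hsurj
    · intro hker
      set e1 : (Fin 1 → Γ.Λ) ≃ₗ[Γ.Λ] Γ.Λ := LinearEquiv.funUnique (Fin 1) Γ.Λ Γ.Λ with he1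
      refine ⟨1, aug ∘ₗ e1.toLinearMap, hsurj.comp e1.surjective, ?_⟩
      rw [LinearMap.ker_comp]
      have : (LinearMap.ker aug).comap e1.toLinearMap
          = (LinearMap.ker aug).map e1.symm.toLinearMap := by
        rw [Submodule.map_equiv_eq_comap_symm]
        simp
      rw [this]
      exact hker.map _
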